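/- Let d be a positive even integer, and identify S^{2d-1} with the unit sphere in ℂ^d. Then the map m : S^1 × S^{2d-1} → S^{2d-1} given by m(λ, ξ) = λξ is homotopic to the projection map p(λ, ξ) = ξ. -/

import Mathlib

open scoped unitInterval

noncomputable section ScalarMulHomotopyAux

namespace ScalarMulHomotopyAux

/-- extend a vector to a function on ℕ by zero -/
def zfun (d : ℕ) (ξ : EuclideanSpace ℂ (Fin d)) : ℕ → ℂ :=
  fun n => if h : n < d then ξ ⟨n, h⟩ else 0

/-- the quaternion left-multiplication formula, coordinatewise -/
def hv (a b : ℂ) (z : ℕ → ℂ) (n : ℕ) : ℂ :=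
  if Even n then a * z n - b * (starRingEnd ℂ) (z (n + 1))
  else a * z n + b * (starRingEnd ℂ) (z (n - 1))

lemma hv_one_zero (z : ℕ → ℂ) (n : ℕ) : hv 1 0 z n = z n := by
  unfold hv; split <;> ring

lemma hv_a_zero (a : ℂ) (z : ℕ → ℂ) (n : ℕ) : hv a 0 z n = a * z n := by
  unfold hv; split <;> ring

lemma hv_pair_normSq (a b : ℂ) (z : ℕ → ℂ) (k : ℕ) :
    Complex.normSq (hv a b z (2 * k)) + Complex.normSq (hv a b z (2 * k + 1)) =
      (Complex.normSq a + Complex.normSq b) *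
        (Complex.normSq (z (2 * k)) + Complex.normSq (z (2 * k + 1))) := by
  have h1 : Even (2 * k) := even_two_mul k
  have h2 : ¬ Even (2 * k + 1) := by simp [Nat.even_add_one, h1]
  have h3 : 2 * k + 1 - 1 = 2 * k := rfl
  simp only [hv, if_pos h1, if_neg h2, h3]
  simp only [Complex.normSq_apply, Complex.mul_re, Complex.mul_im, Complex.sub_re,
    Complex.sub_im, Complex.add_re, Complex.add_im, Complex.conj_re, Complex.conj_im]
  ring

lemma sum_range_two_mul (m : ℕ) (f : ℕ → ℝ) :
    ∑ i ∈ Finset.range (2 * m), f i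
      = ∑ k ∈ Finset.range m, (f (2 * k) + f (2 * k + 1)) := by
  induction m with
  | zero => simp
  | succ n ih =>
    have : 2 * (n + 1) = (2 * n + 1) + 1 := by ring
    rw [this, Finset.sum_range_succ, Finset.sum_range_succ, ih, Finset.sum_range_succ]
    ring

/-- the "a" coefficient of the contraction -/
def aC (t : ℝ) (l : ℂ) : ℂ := ((1 - t ^ 2 : ℝ) : ℂ) + ((t ^ 2 : ℝ) : ℂ) * l

/-- the "b" coefficient of the contraction -/
def bC (t : ℝ) (l : ℂ) : ℂ := ((t * Real.sqrt (1 - t ^ 2) : ℝ) : ℂ) * (1 - l)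

lemma normSq_aC_bC (t : ℝ) (ht0 : 0 ≤ t) (ht1 : t ≤ 1) (l : ℂ) (hl : Complex.normSq l = 1) :
    Complex.normSq (aC t l) + Complex.normSq (bC t l) = 1 := by
  have hs : Real.sqrt (1 - t ^ 2) ^ 2 = 1 - t ^ 2 := by
    rw [Real.sq_sqrt]; nlinarith
  have hx : l.re ^ 2 + l.im ^ 2 = 1 := by
    rw [Complex.normSq_apply] at hl; nlinarith
  simp only [aC, bC, Complex.normSq_apply, Complex.add_re, Complex.add_im, Complex.mul_re,
    Complex.mul_im, Complex.sub_re, Complex.sub_im, Complex.ofReal_re, Complex.ofReal_im,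
    Complex.one_re, Complex.one_im]
  linear_combination (t ^ 2 * (1 - l.re) ^ 2 + t ^ 2 * l.im ^ 2) * hs +
    (t ^ 4 + t ^ 2 * (1 - t ^ 2)) * hx

/-- the homotopy, as a bare function -/
def bigH (d : ℕ)
    (p : I × (Metric.sphere (0 : ℂ) 1 × Metric.sphere (0 : EuclideanSpace ℂ (Fin d)) 1)) :
    EuclideanSpace ℂ (Fin d) :=
  WithLp.toLp 2 fun i => hv (aC (p.1 : ℝ) (p.2.1 : ℂ)) (bC (p.1 : ℝ) (p.2.1 : ℂ)) (zfun d p.2.2) i.val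

end ScalarMulHomotopyAux

end ScalarMulHomotopyAux

open ScalarMulHomotopyAux in
theorem scalar_mul_homotopic_to_proj (d : ℕ) (hd : 0 < d) (hde : Even d) :
    ∃ H : C(I × (Metric.sphere (0 : ℂ) 1 × Metric.sphere (0 : EuclideanSpace ℂ (Fin d)) 1),
            EuclideanSpace ℂ (Fin d)),
      (∀ t l ξ, ‖H (t, (l, ξ))‖ = 1) ∧
      (∀ l ξ, H (0, (l, ξ)) = (ξ : EuclideanSpace ℂ (Fin d))) ∧
      (∀ l ξ, H (1, (l, ξ)) = (l : ℂ) • (ξ : EuclideanSpace ℂ (Fin d))) := by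
  obtain ⟨m, hm⟩ := hde
  have hd2 : d = 2 * m := by omega
  subst hd2
  have hcont : Continuous (bigH (2 * m)) := by
    refine (PiLp.continuous_toLp 2 _).comp ?_
    apply continuous_pi
    intro i
    have hz : ∀ n : ℕ, Continuous fun
        (p : I × (Metric.sphere (0 : ℂ) 1 ×
          Metric.sphere (0 : EuclideanSpace ℂ (Fin (2 * m))) 1)) => zfun (2 * m) p.2.2 n := by
      intro n
      unfold zfun
      by_cases h : n < 2 * m
      · simp only [dif_pos h]
        exact (continuous_apply (⟨n, h⟩ : Fin (2 * m))).comp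
          ((PiLp.continuous_ofLp 2 _).comp (continuous_subtype_val.comp (continuous_snd.comp continuous_snd)))
      · simp only [dif_neg h]; exact continuous_const
    have ht : Continuous fun
        (p : I × (Metric.sphere (0 : ℂ) 1 ×
          Metric.sphere (0 : EuclideanSpace ℂ (Fin (2 * m))) 1)) => (p.1 : ℝ) :=
      continuous_subtype_val.comp continuous_fst
    have hl : Continuous fun
        (p : I × (Metric.sphere (0 : ℂ) 1 ×
          Metric.sphere (0 : EuclideanSpace ℂ (Fin (2 * m))) 1)) => (p.2.1 : ℂ) :=
      continuous_subtype_val.comp (continuous_fst.comp continuous_snd)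
    have ha : Continuous fun
        (p : I × (Metric.sphere (0 : ℂ) 1 ×
          Metric.sphere (0 : EuclideanSpace ℂ (Fin (2 * m))) 1)) =>
          aC (p.1 : ℝ) (p.2.1 : ℂ) := by
      unfold aC
      fun_prop
    have hb : Continuous fun
        (p : I × (Metric.sphere (0 : ℂ) 1 ×
          Metric.sphere (0 : EuclideanSpace ℂ (Fin (2 * m))) 1)) =>
          bC (p.1 : ℝ) (p.2.1 : ℂ) := by
      unfold bC
      fun_prop
    unfold hv
    by_cases h : Even (i : ℕ)
    · simp only [if_pos h]
      exact (ha.mul (hz i.val)).sub (hb.mul (Complex.continuous_conj.comp (hz (i.val + 1))))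
    · simp only [if_neg h]
      exact (ha.mul (hz i.val)).add (hb.mul (Complex.continuous_conj.comp (hz (i.val - 1))))
  refine ⟨⟨bigH (2 * m), hcont⟩, ?_, ?_, ?_⟩
  · -- norm is 1
    intro t l ξ
    have hξ : ‖(ξ : EuclideanSpace ℂ (Fin (2 * m)))‖ = 1 := by
      simpa using mem_sphere_zero_iff_norm.mp ξ.2
    have hlnorm : Complex.normSq (l : ℂ) = 1 := by
      have h : ‖(l : ℂ)‖ = 1 := by simpa using mem_sphere_zero_iff_norm.mp l.2
      rw [Complex.normSq_eq_norm_sq, h, one_pow]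
    have hab : Complex.normSq (aC (t : ℝ) (l : ℂ)) + Complex.normSq (bC (t : ℝ) (l : ℂ)) = 1 :=
      normSq_aC_bC _ t.2.1 t.2.2 _ hlnorm
    have hsum : ∀ (v : EuclideanSpace ℂ (Fin (2 * m))),
        ‖v‖ = Real.sqrt (∑ i : Fin (2 * m), Complex.normSq (v i)) := by
      intro v
      rw [EuclideanSpace.norm_eq]
      congr 1
      refine Finset.sum_congr rfl fun i _ => ?_
      rw [Complex.normSq_eq_norm_sq]
    have hξsum : ∑ i : Fin (2 * m), Complex.normSq ((ξ : EuclideanSpace ℂ (Fin (2 * m))) i) = 1 := by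
      have h1 := hsum (ξ : EuclideanSpace ℂ (Fin (2 * m)))
      rw [hξ] at h1
      have h2 : (0:ℝ) ≤ ∑ i : Fin (2 * m), Complex.normSq ((ξ : EuclideanSpace ℂ (Fin (2 * m))) i) :=
        Finset.sum_nonneg fun i _ => Complex.normSq_nonneg _
      nlinarith [Real.sq_sqrt h2, h1.symm]
    rw [hsum]
    simp only [ContinuousMap.coe_mk]
    have key : ∑ i : Fin (2 * m),
        Complex.normSq ((ScalarMulHomotopyAux.bigH (2 * m)) (t, (l, ξ)) i) = 1 := by
      have e1 : ∑ i : Fin (2 * m),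
          Complex.normSq ((ScalarMulHomotopyAux.bigH (2 * m)) (t, (l, ξ)) i)
          = ∑ n ∈ Finset.range (2 * m),
            Complex.normSq (hv (aC (t : ℝ) (l : ℂ)) (bC (t : ℝ) (l : ℂ)) (zfun (2 * m) ξ) n) := by
        exact Fin.sum_univ_eq_sum_range
          (fun n => Complex.normSq (hv (aC (t : ℝ) (l : ℂ)) (bC (t : ℝ) (l : ℂ))
            (zfun (2 * m) ξ) n)) (2 * m)
      have e2 : ∑ n ∈ Finset.range (2 * m),
            Complex.normSq (zfun (2 * m) ξ n)
          = ∑ i : Fin (2 * m), Complex.normSq ((ξ : EuclideanSpace ℂ (Fin (2 * m))) i) := by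
        rw [← Fin.sum_univ_eq_sum_range]
        refine Finset.sum_congr rfl fun i _ => ?_
        simp [zfun, i.isLt]
      rw [e1, sum_range_two_mul m (fun n => Complex.normSq (hv (aC (t : ℝ) (l : ℂ))
        (bC (t : ℝ) (l : ℂ)) (zfun (2 * m) ξ) n))]
      have e3 : ∀ k ∈ Finset.range m,
          (Complex.normSq (hv (aC (t : ℝ) (l : ℂ)) (bC (t : ℝ) (l : ℂ)) (zfun (2 * m) ξ) (2 * k))
           + Complex.normSq (hv (aC (t : ℝ) (l : ℂ)) (bC (t : ℝ) (l : ℂ)) (zfun (2 * m) ξ) (2 * k + 1)))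
          = (Complex.normSq (zfun (2 * m) ξ (2 * k)) + Complex.normSq (zfun (2 * m) ξ (2 * k + 1))) := by
        intro k _
        rw [hv_pair_normSq, hab, one_mul]
      rw [Finset.sum_congr rfl e3,
        ← sum_range_two_mul m (fun n => Complex.normSq (zfun (2 * m) ξ n)), e2, hξsum]
    rw [key, Real.sqrt_one]
  · -- t = 0
    intro l ξ
    have : (ScalarMulHomotopyAux.bigH (2 * m)) (0, (l, ξ)) = (ξ : EuclideanSpace ℂ (Fin (2 * m))) := by
      ext i
      have ha : aC ((0 : I) : ℝ) (l : ℂ) = 1 := by simp [aC]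
      have hb : bC ((0 : I) : ℝ) (l : ℂ) = 0 := by simp [bC]
      show hv (aC ((0 : I) : ℝ) (l : ℂ)) (bC ((0 : I) : ℝ) (l : ℂ)) (zfun (2 * m) ξ) i.val
        = (ξ : EuclideanSpace ℂ (Fin (2 * m))) i
      rw [ha, hb, hv_one_zero]
      simp [zfun, i.isLt]
    exact this
  · -- t = 1
    intro l ξ
    have : (ScalarMulHomotopyAux.bigH (2 * m)) (1, (l, ξ))
        = (l : ℂ) • (ξ : EuclideanSpace ℂ (Fin (2 * m))) := by
      ext i
      have ha : aC ((1 : I) : ℝ) (l : ℂ) = (l : ℂ) := by simp [aC]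
      have hb : bC ((1 : I) : ℝ) (l : ℂ) = 0 := by simp [bC]
      show hv (aC ((1 : I) : ℝ) (l : ℂ)) (bC ((1 : I) : ℝ) (l : ℂ)) (zfun (2 * m) ξ) i.val
        = ((l : ℂ) • (ξ : EuclideanSpace ℂ (Fin (2 * m)))) i
      rw [ha, hb, hv_a_zero]
      simp [zfun, i.isLt, PiLp.smul_apply, smul_eq_mul]
    exact this
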